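/- Let V be a complex Banach space whose norm is differentiable away from the origin in the following sense: for every v ∈ V with v ≠ 0 and every w ∈ V the limit A(v, w) = lim_{t→0, t real} (‖v + t w‖ − ‖v‖)/t exists, and for every fixed v ≠ 0 the map w ↦ A(v, w) is a bounded real-linear functional on V. Let W be a nontrivial closed complex subspace of V and let W′ = { w ∈ V : A(v, w) = 0 for all v ∈ W with v ≠ 0 }, a closed subspace of V. Then there exists a projection of norm 1 from V onto W (a continuous linear map P : V → V with P ∘ P = P, range of P equal to W, and operator norm ‖P‖ = 1) if and only if W′ is a complementary subspace to W, i.e. W ∩ W′ = {0} and every element of V is the sum of an element of W and an element of W′. -/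

import Mathlib

open Topology Filter

section Aux

variable {V : Type*} [NormedAddCommGroup V] [NormedSpace ℂ V]

/-- `A v v = ‖v‖` for `v ≠ 0`. -/
lemma aux_A_self (A : V → V → ℝ)
    (hA_lim : ∀ v : V, v ≠ 0 → ∀ w : V,
      Tendsto (fun t : ℝ => (‖v + t • w‖ - ‖v‖) / t) (𝓝[≠] (0 : ℝ)) (𝓝 (A v w)))
    (v : V) (hv : v ≠ 0) : A v v = ‖v‖ := by
  have h1 : Tendsto (fun t : ℝ => (‖v + t • v‖ - ‖v‖) / t) (𝓝[≠] (0 : ℝ)) (𝓝 ‖v‖) := by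
    have hev : ∀ᶠ t in 𝓝[≠] (0 : ℝ), (‖v + t • v‖ - ‖v‖) / t = ‖v‖ := by
      have hmem : Set.Ioo (-1 : ℝ) 1 ∈ 𝓝 (0 : ℝ) :=
        Ioo_mem_nhds (by norm_num) (by norm_num)
      filter_upwards [inter_mem_nhdsWithin _ hmem, self_mem_nhdsWithin] with t ht ht0
      have h1t : (0 : ℝ) < 1 + t := by
        have := ht.2.1
        linarith
      have : v + t • v = (1 + t) • v := by
        rw [add_smul, one_smul]
      have ht0' : t ≠ 0 := ht0
      rw [this, norm_smul, Real.norm_eq_abs, abs_of_pos h1t, div_eq_iff ht0']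
      ring
    exact tendsto_const_nhds.congr' (by filter_upwards [hev] with t h using h.symm)
  exact tendsto_nhds_unique (hA_lim v hv v) h1

/-- Scaling: `A (c • v) (c • w) = ‖c‖ * A v w`. -/
lemma aux_A_smul (A : V → V → ℝ)
    (hA_lim : ∀ v : V, v ≠ 0 → ∀ w : V,
      Tendsto (fun t : ℝ => (‖v + t • w‖ - ‖v‖) / t) (𝓝[≠] (0 : ℝ)) (𝓝 (A v w)))
    (c : ℂ) (hc : c ≠ 0) (v : V) (hv : v ≠ 0) (w : V) :
    A (c • v) (c • w) = ‖c‖ * A v w := by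
  have hcv : c • v ≠ 0 := smul_ne_zero hc hv
  have h1 : Tendsto (fun t : ℝ => (‖c • v + t • (c • w)‖ - ‖c • v‖) / t) (𝓝[≠] (0 : ℝ))
      (𝓝 (‖c‖ * A v w)) := by
    have hcongr : ∀ t : ℝ, (‖c • v + t • (c • w)‖ - ‖c • v‖) / t
        = ‖c‖ * ((‖v + t • w‖ - ‖v‖) / t) := by
      intro t
      have : c • v + t • (c • w) = c • (v + t • w) := by
        rw [smul_comm t c w, smul_add]
      rw [this, norm_smul, norm_smul]
      ring
    simp only [hcongr]
    exact (hA_lim v hv w).const_mul ‖c‖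
  exact tendsto_nhds_unique (hA_lim (c • v) hcv (c • w)) h1

end Aux

/-- Earle–Kra; existence criterion for a norm-one projection.
`V` is a complex Banach space whose norm is differentiable away from `0`:
for each `v ≠ 0` and `w`, `A v w = lim_{t→0, t∈ℝ} (‖v + t w‖ − ‖v‖)/t` exists and
`w ↦ A v w` is a bounded real-linear functional.  For a nontrivial closed complex
subspace `W` and `W′ = {w | A v w = 0 for all v ∈ W \ {0}}`, there is a projection
of norm one from `V` onto `W` iff `W ∩ W′ = {0}` and `W + W′ = V`. -/
theorem stmt3
    (V : Type*) [NormedAddCommGroup V] [NormedSpace ℂ V] [CompleteSpace V]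
    (A : V → V → ℝ)
    (hA_lim : ∀ v : V, v ≠ 0 → ∀ w : V,
      Tendsto (fun t : ℝ => (‖v + t • w‖ - ‖v‖) / t) (𝓝[≠] (0 : ℝ)) (𝓝 (A v w)))
    (hA_lin : ∀ v : V, v ≠ 0 → IsBoundedLinearMap ℝ (A v))
    (W : Submodule ℂ V) (hW_closed : IsClosed (W : Set V)) (hW_ne : W ≠ ⊥) :
    (∃ P : V →L[ℂ] V, (∀ x, P (P x) = P x) ∧ Set.range P = (W : Set V) ∧ ‖P‖ = 1) ↔
      ((W : Set V) ∩ {w : V | ∀ v ∈ W, v ≠ 0 → A v w = 0} = {0} ∧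
        ∀ x : V, ∃ w ∈ (W : Set V), ∃ w' ∈ {w : V | ∀ v ∈ W, v ≠ 0 → A v w = 0},
          x = w + w') := by
  have hsub : 𝓝[>] (0 : ℝ) ≤ 𝓝[≠] (0 : ℝ) :=
    nhdsWithin_mono 0 (fun t ht => ne_of_gt ht)
  have hsub' : 𝓝[<] (0 : ℝ) ≤ 𝓝[≠] (0 : ℝ) :=
    nhdsWithin_mono 0 (fun t ht => ne_of_lt ht)
  constructor
  · rintro ⟨P, hPP, hPrange, hPnorm⟩
    have hPW : ∀ v ∈ W, P v = v := by
      intro v hv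
      have hv' : v ∈ Set.range ⇑P := by rw [hPrange]; exact hv
      obtain ⟨y, rfl⟩ := hv'
      exact hPP y
    constructor
    · ext x
      simp only [Set.mem_inter_iff, Set.mem_setOf_eq, Set.mem_singleton_iff]
      constructor
      · rintro ⟨hxW, hxW'⟩
        by_contra hx0
        have h0 : A x x = 0 := hxW' x hxW hx0
        have h1 : A x x = ‖x‖ := aux_A_self A hA_lim x hx0
        exact hx0 (norm_eq_zero.1 (h1.symm.trans h0))
      · rintro rfl
        refine ⟨W.zero_mem, fun v hv hv0 => ?_⟩
        exact (hA_lin v hv0).toIsLinearMap.map_zero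
    · intro x
      refine ⟨P x, hPrange ▸ Set.mem_range_self x, x - P x, ?_, by abel⟩
      intro v hv hv0
      have hPu : P (x - P x) = 0 := by
        rw [map_sub, hPP, sub_self]
      have hkey : ∀ t : ℝ, ‖v‖ ≤ ‖v + t • (x - P x)‖ := by
        intro t
        have h1 : P (v + t • (x - P x)) = v := by
          rw [map_add, hPW v hv, P.map_smul_of_tower, hPu, smul_zero, add_zero]
        calc ‖v‖ = ‖P (v + t • (x - P x))‖ := by rw [h1]
          _ ≤ ‖P‖ * ‖v + t • (x - P x)‖ := P.le_opNorm _
          _ = ‖v + t • (x - P x)‖ := by rw [hPnorm, one_mul]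
      have hge : 0 ≤ A v (x - P x) := by
        refine ge_of_tendsto ((hA_lim v hv0 (x - P x)).mono_left hsub) ?_
        filter_upwards [self_mem_nhdsWithin] with t ht
        exact div_nonneg (by linarith [hkey t]) (le_of_lt ht)
      have hle : A v (x - P x) ≤ 0 := by
        refine le_of_tendsto ((hA_lim v hv0 (x - P x)).mono_left hsub') ?_
        filter_upwards [self_mem_nhdsWithin] with t ht
        exact div_nonpos_of_nonneg_of_nonpos (by linarith [hkey t]) (le_of_lt ht)
      linarith
  · rintro ⟨h1, h2⟩
    set S : Set V := {w : V | ∀ v ∈ W, v ≠ 0 → A v w = 0} with hS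
    have hzero : (0 : V) ∈ S := fun v hv hv0 => (hA_lin v hv0).toIsLinearMap.map_zero
    have hadd : ∀ a b : V, a ∈ S → b ∈ S → a + b ∈ S := by
      intro a b ha hb v hv hv0
      rw [(hA_lin v hv0).toIsLinearMap.map_add a b, ha v hv hv0, hb v hv hv0, add_zero]
    have hsmul : ∀ (c : ℂ) (w : V), w ∈ S → c • w ∈ S := by
      intro c w hw v hv hv0
      rcases eq_or_ne c 0 with rfl | hc
      · rw [zero_smul]; exact hzero v hv hv0
      · have hv' : c⁻¹ • v ∈ W := W.smul_mem _ hv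
        have hv'0 : c⁻¹ • v ≠ 0 := smul_ne_zero (inv_ne_zero hc) hv0
        have hvc : c • (c⁻¹ • v) = v := by
          rw [smul_smul, mul_inv_cancel₀ hc, one_smul]
        calc A v (c • w) = A (c • (c⁻¹ • v)) (c • w) := by rw [hvc]
          _ = ‖c‖ * A (c⁻¹ • v) w := aux_A_smul A hA_lim c hc _ hv'0 w
          _ = 0 := by rw [hw _ hv' hv'0, mul_zero]
    set W' : Submodule ℂ V :=
      { carrier := S
        add_mem' := fun {a b} ha hb => hadd a b ha hb
        zero_mem' := hzero
        smul_mem' := hsmul } with hW'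
    have hW'_closed : IsClosed (W' : Set V) := by
      have : (W' : Set V) = ⋂ (v : V) (_ : v ∈ W) (_ : v ≠ 0), (A v) ⁻¹' {0} := by
        ext w
        simp [Set.mem_iInter, W', S]
      rw [this]
      exact isClosed_iInter fun v => isClosed_iInter fun hv => isClosed_iInter fun hv0 =>
        isClosed_singleton.preimage (hA_lin v hv0).continuous
    have hcompl : IsCompl W W' := by
      constructor
      · rw [Submodule.disjoint_def]
        intro x hxW hxW'
        have : x ∈ (W : Set V) ∩ S := ⟨hxW, hxW'⟩
        rwa [h1, Set.mem_singleton_iff] at this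
      · rw [codisjoint_iff_le_sup]
        intro x _
        obtain ⟨w, hw, w', hw', hx⟩ := h2 x
        exact Submodule.mem_sup.2 ⟨w, hw, w', hw', hx.symm⟩
    set P0 : V →L[ℂ] W := W.linearProjOfClosedCompl W' hcompl hW_closed hW'_closed with hP0
    set P : V →L[ℂ] V := W.subtypeL.comp P0 with hPdef
    have hPleft : ∀ v ∈ W, P v = v := by
      intro v hv
      have : P0 v = ⟨v, hv⟩ := by
        rw [hP0, Submodule.coe_continuous_linearProjOfClosedCompl']
        exact Submodule.linearProjOfIsCompl_apply_left hcompl ⟨v, hv⟩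
      simp [hPdef, this]
    have hPright : ∀ u ∈ W', P u = 0 := by
      intro u hu
      have : P0 u = 0 := by
        rw [hP0, Submodule.coe_continuous_linearProjOfClosedCompl']
        exact Submodule.linearProjOfIsCompl_apply_right' hcompl hu
      simp [hPdef, this]
    have hmemW : ∀ x : V, P x ∈ W := fun x => (P0 x).2
    -- the key norm inequality
    have hkey : ∀ v ∈ W, ∀ u ∈ W', ‖v‖ ≤ ‖v + u‖ := by
      intro v hv u hu
      rcases eq_or_ne v 0 with rfl | hv0
      · simp
      · have hAvu : A v u = 0 := hu v hv hv0
        have hslope : ∀ t : ℝ, t ∈ Set.Ioc (0 : ℝ) 1 →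
            (‖v + t • u‖ - ‖v‖) / t ≤ ‖v + u‖ - ‖v‖ := by
          intro t ht
          have ht0 : 0 < t := ht.1
          have ht1 : t ≤ 1 := ht.2
          have hconv : v + t • u = (1 - t) • v + t • (v + u) := by
            rw [smul_add, sub_smul, one_smul]
            abel
          have hb : ‖v + t • u‖ ≤ (1 - t) * ‖v‖ + t * ‖v + u‖ := by
            rw [hconv]
            calc ‖(1 - t) • v + t • (v + u)‖ ≤ ‖(1 - t) • v‖ + ‖t • (v + u)‖ :=
                norm_add_le _ _
              _ = (1 - t) * ‖v‖ + t * ‖v + u‖ := by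
                rw [norm_smul, norm_smul, Real.norm_eq_abs, Real.norm_eq_abs,
                  abs_of_nonneg (by linarith), abs_of_pos ht0]
          rw [div_le_iff₀ ht0]
          nlinarith [norm_nonneg v]
        have : A v u ≤ ‖v + u‖ - ‖v‖ := by
          refine le_of_tendsto ((hA_lim v hv0 u).mono_left hsub) ?_
          have hmem : Set.Ioc (0 : ℝ) 1 ∈ 𝓝[>] (0 : ℝ) :=
            Ioc_mem_nhdsGT_of_mem ⟨le_rfl, one_pos⟩
          filter_upwards [hmem] with t ht using hslope t ht
        linarith [hAvu ▸ this]
    have hPle : ∀ x : V, ‖P x‖ ≤ ‖x‖ := by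
      intro x
      obtain ⟨w, hw, w', hw', hx⟩ := h2 x
      have hPx : P x = w := by
        rw [hx, map_add, hPleft w hw, hPright w' hw', add_zero]
      rw [hPx, hx]
      exact hkey w hw w' hw'
    refine ⟨P, ?_, ?_, ?_⟩
    · intro x
      exact hPleft (P x) (hmemW x)
    · apply Set.eq_of_subset_of_subset
      · rintro _ ⟨x, rfl⟩
        exact hmemW x
      · intro v hv
        exact ⟨v, hPleft v hv⟩
    · obtain ⟨v, hv, hv0⟩ := Submodule.exists_mem_ne_zero_of_ne_bot hW_ne
      refine le_antisymm (P.opNorm_le_bound zero_le_one fun x => by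
        rw [one_mul]; exact hPle x) ?_
      have : ‖v‖ ≤ ‖P‖ * ‖v‖ := by
        calc ‖v‖ = ‖P v‖ := by rw [hPleft v hv]
          _ ≤ ‖P‖ * ‖v‖ := P.le_opNorm v
      have hvpos : 0 < ‖v‖ := norm_pos_iff.2 hv0
      nlinarith
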